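/- (Polyak's lemma) If nonnegative real sequences {v_k}, {u_k}, {b_k}, {c_k} satisfy Σ_{k=0}^∞ b_k < ∞, Σ_{k=0}^∞ c_k < ∞, and v_{k+1} ≤ (1 + b_k)v_k − u_k + c_k for all k ≥ 0, then {v_k} converges and Σ_{k=0}^∞ u_k < ∞. -/

import Mathlib

/-- Polyak's lemma: If nonnegative sequences `v, u, b, c` satisfy
`∑ b_k < ∞`, `∑ c_k < ∞`, and `v_{k+1} ≤ (1 + b_k) v_k − u_k + c_k` for all `k`,
then `v` converges and `∑ u_k < ∞`. -/
theorem stmt3 (v u b c : ℕ → ℝ)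
    (hv : ∀ k, 0 ≤ v k) (hu : ∀ k, 0 ≤ u k) (hb : ∀ k, 0 ≤ b k) (hc : ∀ k, 0 ≤ c k)
    (hbs : Summable b) (hcs : Summable c)
    (hrec : ∀ k, v (k + 1) ≤ (1 + b k) * v k - u k + c k) :
    (∃ L : ℝ, Filter.Tendsto v Filter.atTop (nhds L)) ∧ Summable u := by
  set P : ℕ → ℝ := fun n => ∏ j ∈ Finset.range n, (1 + b j) with hPdef
  have hP1 : ∀ n, 1 ≤ P n := by
    intro n
    have h := Finset.prod_le_prod (s := Finset.range n) (f := fun _ => (1:ℝ))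
      (g := fun j => 1 + b j) (fun j _ => zero_le_one) (fun j _ => by linarith [hb j])
    simpa using h
  have hPpos : ∀ n, 0 < P n := fun n => lt_of_lt_of_le one_pos (hP1 n)
  have hPsucc : ∀ n, P (n + 1) = P n * (1 + b n) := fun n => Finset.prod_range_succ _ n
  have hPmono : Monotone P := monotone_nat_of_le_succ fun n => by
    rw [hPsucc]; nlinarith [hPpos n, hb n]
  have hPle : ∀ n, P n ≤ Real.exp (∑' k, b k) := by
    intro n
    calc P n ≤ ∏ j ∈ Finset.range n, Real.exp (b j) :=
          Finset.prod_le_prod (fun j _ => by linarith [hb j])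
            (fun j _ => by linarith [Real.add_one_le_exp (b j)])
      _ = Real.exp (∑ j ∈ Finset.range n, b j) := (Real.exp_sum _ _).symm
      _ ≤ _ := Real.exp_le_exp.2 (Summable.sum_le_tsum _ (fun i _ => hb i) hbs)
  set w : ℕ → ℝ := fun n => v n / P n with hwdef
  have hw0 : ∀ n, 0 ≤ w n := fun n => div_nonneg (hv n) (hPpos n).le
  have hwv : ∀ n, v n = w n * P n := fun n => (div_mul_cancel₀ _ (hPpos n).ne').symm
  have hwstep : ∀ n, w (n + 1) ≤ w n + c n := by
    intro n
    have h1 : v (n + 1) ≤ (1 + b n) * v n + c n := by linarith [hrec n, hu n]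
    have h2 : w (n + 1) = v (n + 1) / P (n + 1) := rfl
    rw [h2, div_le_iff₀ (hPpos (n + 1))]
    have hexp : w n * P (n + 1) = (1 + b n) * v n := by
      calc w n * P (n + 1) = v n / P n * P n * (1 + b n) := by rw [hPsucc]; ring
        _ = v n * (1 + b n) := by rw [div_mul_cancel₀ _ (hPpos n).ne']
        _ = (1 + b n) * v n := mul_comm _ _
    nlinarith [hP1 (n + 1), hc n]
  set S : ℕ → ℝ := fun n => ∑ j ∈ Finset.range n, c j with hSdef
  have hSle : ∀ n, S n ≤ ∑' k, c k := fun n => Summable.sum_le_tsum _ (fun i _ => hc i) hcs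
  have hStend : Filter.Tendsto S Filter.atTop (nhds (∑' k, c k)) :=
    hcs.hasSum.tendsto_sum_nat
  set z : ℕ → ℝ := fun n => w n - S n with hzdef
  have hzanti : Antitone z := antitone_nat_of_succ_le fun n => by
    have := hwstep n
    have hS : S (n + 1) = S n + c n := Finset.sum_range_succ _ n
    simp only [hzdef]
    rw [hS]; linarith
  have hzbdd : BddBelow (Set.range z) := by
    refine ⟨-(∑' k, c k), ?_⟩
    rintro x ⟨n, rfl⟩
    have := hw0 n
    have := hSle n
    simp only [hzdef]; linarith
  have hztend : Filter.Tendsto z Filter.atTop (nhds (⨅ n, z n)) :=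
    tendsto_atTop_ciInf hzanti hzbdd
  have hwtend : Filter.Tendsto w Filter.atTop (nhds ((⨅ n, z n) + ∑' k, c k)) := by
    have : w = fun n => z n + S n := by funext n; simp [hzdef]
    rw [this]
    exact hztend.add hStend
  have hPbdd : BddAbove (Set.range P) := by
    refine ⟨Real.exp (∑' k, b k), ?_⟩
    rintro x ⟨n, rfl⟩; exact hPle n
  have hPtend : Filter.Tendsto P Filter.atTop (nhds (⨆ n, P n)) :=
    tendsto_atTop_ciSup hPmono hPbdd
  have hvtend : Filter.Tendsto v Filter.atTop
      (nhds (((⨅ n, z n) + ∑' k, c k) * ⨆ n, P n)) := by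
    have : v = fun n => w n * P n := funext hwv
    rw [this]
    exact hwtend.mul hPtend
  refine ⟨⟨_, hvtend⟩, ?_⟩
  -- Summability of u
  have hw0v : w 0 = v 0 := by simp [hwdef, hPdef]
  have hwle : ∀ n, w n ≤ w 0 + S n := by
    intro n
    induction n with
    | zero => simp [hSdef]
    | succ n ih =>
      have := hwstep n
      have hS : S (n + 1) = S n + c n := Finset.sum_range_succ _ n
      rw [hS]; linarith
  set M : ℝ := (v 0 + ∑' k, c k) * Real.exp (∑' k, b k) with hMdef
  have hM0 : 0 ≤ M := by
    apply mul_nonneg _ (Real.exp_pos _).le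
    have : 0 ≤ ∑' k, c k := tsum_nonneg hc
    linarith [hv 0]
  have hvM : ∀ n, v n ≤ M := by
    intro n
    rw [hwv n]
    have h1 : w n ≤ v 0 + ∑' k, c k := by
      linarith [hwle n, hSle n, hw0v.le, hw0v.ge]
    have h0 : (0:ℝ) ≤ v 0 + ∑' k, c k := by
      have : 0 ≤ ∑' k, c k := tsum_nonneg hc; linarith [hv 0]
    exact mul_le_mul h1 (hPle n) (hPpos n).le h0
  apply summable_of_sum_range_le (c := v 0 + M * (∑' k, b k) + ∑' k, c k) hu
  intro n
  have key : ∀ k, u k ≤ (v k - v (k + 1)) + b k * v k + c k := by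
    intro k; have := hrec k; nlinarith
  calc ∑ k ∈ Finset.range n, u k
      ≤ ∑ k ∈ Finset.range n, ((v k - v (k + 1)) + b k * v k + c k) :=
        Finset.sum_le_sum fun k _ => key k
    _ = (∑ k ∈ Finset.range n, (v k - v (k + 1)))
        + (∑ k ∈ Finset.range n, b k * v k) + ∑ k ∈ Finset.range n, c k := by
        rw [← Finset.sum_add_distrib, ← Finset.sum_add_distrib]
    _ ≤ v 0 + M * (∑' k, b k) + ∑' k, c k := by
        have h1 : (∑ k ∈ Finset.range n, (v k - v (k + 1))) = v 0 - v n :=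
          Finset.sum_range_sub' v n
        have h2 : ∑ k ∈ Finset.range n, b k * v k ≤ M * ∑' k, b k := by
          calc ∑ k ∈ Finset.range n, b k * v k
              ≤ ∑ k ∈ Finset.range n, b k * M :=
                Finset.sum_le_sum fun k _ => mul_le_mul_of_nonneg_left (hvM k) (hb k)
            _ = (∑ k ∈ Finset.range n, b k) * M := by rw [← Finset.sum_mul]
            _ ≤ (∑' k, b k) * M := by
                apply mul_le_mul_of_nonneg_right _ hM0
                exact Summable.sum_le_tsum _ (fun i _ => hb i) hbs
            _ = M * ∑' k, b k := mul_comm _ _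
        have h3 := hSle n
        have h4 := hv n
        rw [h1]
        simp only [hSdef] at h3
        linarith
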